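/- Let M be a compact, connected Riemannian manifold without boundary, and let (X_t)_t be a continuous flow on M such that: (1) (X_t)_t has at most finitely many equilibrium points; (2) the set of periodic points of (X_t)_t is dense in M; (3) (X_t)_t is transitive; and (4) for every T > 0 the set of periodic orbits of period smaller than T forms a subset of M consisting of finitely many disjoint closed curves. Then the C^0-centralizer of (X_t)_t is trivial: for every continuous flow (Y_s)_s commuting with (X_t)_t there exists c ∈ ℝ such that Y_t = X_{ct} for every t ∈ ℝ. -/

import Mathlib

open Set Filter Topology Metric

noncomputable section

variable {M : Type*} [MetricSpace M]

/-- A (global, jointly continuous) flow on `M`. -/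
def IsFlow (φ : ℝ → M → M) : Prop :=
  Continuous (fun p : ℝ × M => φ p.1 p.2) ∧ (∀ x, φ 0 x = x) ∧
    ∀ s t x, φ (s + t) x = φ s (φ t x)

/-- Two flows commute: `Y_s ∘ X_t = X_t ∘ Y_s` for all `s, t`. -/
def FlowsCommute (φ ψ : ℝ → M → M) : Prop :=
  ∀ (s t : ℝ) (x : M), ψ s (φ t x) = φ t (ψ s x)

/-- The orbit of a point under a flow. -/
def flowOrbit (φ : ℝ → M → M) (p : M) : Set M := range fun t => φ t p

/-- An equilibrium point of a flow. -/
def IsEquilibrium (φ : ℝ → M → M) (p : M) : Prop := ∀ t, φ t p = p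

/-- A periodic (non-equilibrium) point of a flow. -/
def IsPeriodicPoint (φ : ℝ → M → M) (p : M) : Prop :=
  (∃ T > 0, φ T p = p) ∧ ¬ IsEquilibrium φ p

/-- The flow is (topologically) transitive: some point has dense forward orbit. -/
def IsTransitiveFlow (φ : ℝ → M → M) : Prop :=
  ∃ x : M, Dense {y | ∃ t : ℝ, 0 ≤ t ∧ φ t x = y}

/-- For every `T > 0`, the set of periodic orbits of period smaller than `T` consists of
finitely many (disjoint) closed curves, i.e. of finitely many periodic orbits. -/
def FinitelyManyShortPeriodicOrbits (φ : ℝ → M → M) : Prop :=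
  ∀ T : ℝ, 0 < T → ∃ F : Set M, F.Finite ∧
    ∀ p : M, IsPeriodicPoint φ p → (∃ s : ℝ, 0 < s ∧ s < T ∧ φ s p = p) →
      ∃ q ∈ F, flowOrbit φ p = flowOrbit φ q
variable {φ : ℝ → M → M}

lemma flow_cont_t (hφ : IsFlow φ) (x : M) : Continuous fun t => φ t x :=
  hφ.1.comp (continuous_id.prodMk continuous_const)

lemma flow_cont_x (hφ : IsFlow φ) (t : ℝ) : Continuous fun x => φ t x :=
  hφ.1.comp (continuous_const.prodMk continuous_id)

lemma flow_cancel (hφ : IsFlow φ) (t : ℝ) (x : M) : φ (-t) (φ t x) = x := by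
  rw [← hφ.2.2, neg_add_cancel, hφ.2.1]

lemma flow_zsmul_period (hφ : IsFlow φ) {T : ℝ} {p : M} (hTp : φ T p = p) (k : ℤ) :
    φ (k • T) p = p := by
  induction k using Int.induction_on with
  | zero => simpa using hφ.2.1 p
  | succ k ih =>
      have : ((k : ℤ) + 1) • T = (k : ℤ) • T + T := by rw [add_smul, one_smul]
      rw [this, hφ.2.2]
      rw [hTp, ih]
  | pred k ih =>
      have h1 : (-(k : ℤ) - 1) • T + T = (-(k : ℤ)) • T := by rw [sub_smul, one_smul]; ring
      have := hφ.2.2 ((-(k : ℤ) - 1) • T) T p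
      rw [h1, hTp] at this
      rw [← this, ih]

lemma flow_period_mem (hφ : IsFlow φ) {T t : ℝ} {p : M}
    (hTp : φ T p = p) (ht : t ∈ AddSubgroup.zmultiples T) : φ t p = p := by
  obtain ⟨k, rfl⟩ := AddSubgroup.mem_zmultiples_iff.mp ht
  exact flow_zsmul_period hφ hTp k

lemma mem_orbit_self (hφ : IsFlow φ) (p : M) : p ∈ flowOrbit φ p := ⟨0, hφ.2.1 p⟩

lemma orbit_eq_of_mem (hφ : IsFlow φ) {x y : M} (h : y ∈ flowOrbit φ x) :
    flowOrbit φ y = flowOrbit φ x := by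
  obtain ⟨a, rfl⟩ := h
  ext z
  simp only [flowOrbit, mem_range]
  constructor
  · rintro ⟨t, rfl⟩
    exact ⟨t + a, by rw [hφ.2.2]⟩
  · rintro ⟨t, rfl⟩
    exact ⟨t - a, by rw [← hφ.2.2, sub_add_cancel]⟩

lemma exists_minimal_period (hφ : IsFlow φ) {p : M} (hp : IsPeriodicPoint φ p) :
    ∃ T₀ : ℝ, 0 < T₀ ∧ ∀ t : ℝ, φ t p = p ↔ t ∈ AddSubgroup.zmultiples T₀ := by
  set G : AddSubgroup ℝ :=
    { carrier := {t | φ t p = p}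
      zero_mem' := hφ.2.1 p
      add_mem' := by
        intro a b ha hb
        simp only [Set.mem_setOf_eq] at *
        rw [hφ.2.2, hb, ha]
      neg_mem' := by
        intro a ha
        simp only [Set.mem_setOf_eq] at *
        nth_rewrite 1 [← ha]
        exact flow_cancel hφ a p } with hG
  have hclosed : IsClosed (G : Set ℝ) :=
    isClosed_eq (flow_cont_t hφ p) continuous_const
  rcases AddSubgroup.dense_or_cyclic G with hdense | ⟨a, ha⟩
  · exfalso
    apply hp.2
    intro t
    have : (G : Set ℝ) = Set.univ := hclosed.closure_eq ▸ hdense.closure_eq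
    have ht : t ∈ (G : Set ℝ) := this ▸ Set.mem_univ t
    exact ht
  · have hzm : G = AddSubgroup.zmultiples a := by
      rw [ha]; exact (AddSubgroup.zmultiples_eq_closure a).symm
    obtain ⟨T, hT, hTp⟩ := hp.1
    have hTmem : T ∈ G := hTp
    have hane : a ≠ 0 := by
      rintro rfl
      rw [hzm] at hTmem
      obtain ⟨k, hk⟩ := AddSubgroup.mem_zmultiples_iff.mp hTmem
      simp at hk
      linarith
    have key : ∀ t : ℝ, φ t p = p ↔ t ∈ AddSubgroup.zmultiples a := by
      intro t
      constructor
      · intro h; rw [← hzm]; exact h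
      · intro h; rw [← hzm] at h; exact h
    rcases lt_or_gt_of_ne hane with hneg | hpos
    · refine ⟨-a, by linarith, fun t => (key t).trans ?_⟩
      constructor
      · intro h
        obtain ⟨k, hk⟩ := AddSubgroup.mem_zmultiples_iff.mp h
        exact AddSubgroup.mem_zmultiples_iff.mpr ⟨-k, by simp [hk]⟩
      · intro h
        obtain ⟨k, hk⟩ := AddSubgroup.mem_zmultiples_iff.mp h
        exact AddSubgroup.mem_zmultiples_iff.mpr ⟨-k, by rw [← hk]; simp⟩
    · exact ⟨a, hpos, key⟩

lemma orbit_eq_image (hφ : IsFlow φ) {T : ℝ} {p : M} (hT : 0 < T) (hTp : φ T p = p) :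
    flowOrbit φ p = (fun t => φ t p) '' Icc 0 T := by
  apply Set.Subset.antisymm
  · rintro y ⟨t, rfl⟩
    refine ⟨toIcoMod hT 0 t, ?_, ?_⟩
    · have := toIcoMod_mem_Ico hT 0 t
      rw [zero_add] at this
      exact ⟨this.1, this.2.le⟩
    · show φ (toIcoMod hT 0 t) p = φ t p
      have hsub : t - toIcoMod hT 0 t = toIcoDiv hT 0 t • T := self_sub_toIcoMod hT 0 t
      have h2 : φ t p = φ (toIcoMod hT 0 t + (t - toIcoMod hT 0 t)) p := by ring_nf
      rw [h2, hφ.2.2, hsub, flow_zsmul_period hφ hTp]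
  · rintro y ⟨t, _, rfl⟩
    exact ⟨t, rfl⟩

lemma orbit_isCompact (hφ : IsFlow φ) {T : ℝ} {p : M} (hT : 0 < T) (hTp : φ T p = p) :
    IsCompact (flowOrbit φ p) := by
  rw [orbit_eq_image hφ hT hTp]
  exact isCompact_Icc.image (flow_cont_t hφ p)
lemma coe_inj_small {T : ℝ} (hT : 0 < T) {x y : ℝ} (h : |x - y| < T)
    (he : (x : AddCircle T) = (y : AddCircle T)) : x = y := by
  have hmem : x - y ∈ AddSubgroup.zmultiples T := QuotientAddGroup.eq_iff_sub_mem.mp he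
  obtain ⟨k, hk⟩ := AddSubgroup.mem_zmultiples_iff.mp hmem
  rw [zsmul_eq_mul] at hk
  rcases eq_or_ne k 0 with rfl | hk0
  · simp at hk; linarith [abs_nonneg (x - y), hk]
  · exfalso
    have h1 : (1 : ℝ) ≤ |(k : ℝ)| := by
      have := Int.one_le_abs hk0
      calc (1:ℝ) = ((1:ℤ):ℝ) := by norm_num
        _ ≤ ((|k| : ℤ) : ℝ) := by exact_mod_cast this
        _ = |(k : ℝ)| := by rw [Int.cast_abs]
    have h2 : |x - y| = |(k:ℝ)| * T := by rw [← hk, abs_mul, abs_of_pos hT]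
    nlinarith

lemma addCircle_hom_linear {T : ℝ} (hT : 0 < T) (g : ℝ → AddCircle T)
    (hg : Continuous g) (hadd : ∀ a b : ℝ, g (a + b) = g a + g b) :
    ∃ c : ℝ, ∀ s : ℝ, g s = ((c * s : ℝ) : AddCircle T) := by
  haveI : Fact (0 < T) := ⟨hT⟩
  have hg0 : g 0 = 0 := by
    have := hadd 0 0
    simp only [add_zero] at this
    exact (left_eq_add.mp this)
  -- the lift
  set a : ℝ := -(T/2) with ha
  have haT : a + T = T/2 := by rw [ha]; ring
  set ℓ : AddCircle T → ℝ := fun v => ((AddCircle.equivIoc T a v : ℝ)) with hℓ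
  have sect : ∀ v : AddCircle T, ((ℓ v : ℝ) : AddCircle T) = v := by
    intro v
    exact (AddCircle.equivIoc T a).symm_apply_apply v
  have memℓ : ∀ v, ℓ v ∈ Ioc a (a + T) := fun v => (AddCircle.equivIoc T a v).2
  -- ℓ of small elements
  have ℓsmall : ∀ u : ℝ, |u| < T/2 → ℓ ((u : ℝ) : AddCircle T) = u := by
    intro u hu
    apply coe_inj_small hT _ (sect _)
    have h1 := memℓ ((u : ℝ) : AddCircle T)
    rw [haT] at h1
    rw [abs_lt] at hu ⊢
    constructor <;> [skip; skip] <;>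
      · simp only [ha] at h1 ⊢
        cases h1 with
        | intro h1l h1r => linarith [hu.1, hu.2]
  -- the open set W
  set W : Set (AddCircle T) := ((↑) : ℝ → AddCircle T) '' Ioo (-(T/4)) (T/4) with hW
  have hWopen : IsOpen W := by
    exact QuotientAddGroup.isOpenMap_coe _ isOpen_Ioo
  have h0W : (0 : AddCircle T) ∈ W := ⟨0, by constructor <;> simp <;> linarith, by simp⟩
  -- choose δ
  have hnhds : g ⁻¹' W ∈ 𝓝 (0 : ℝ) := by
    apply hg.continuousAt.preimage_mem_nhds
    rw [hg0]; exact hWopen.mem_nhds h0W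
  obtain ⟨ε, hε, hball⟩ := Metric.mem_nhds_iff.mp hnhds
  set δ : ℝ := ε / 2 with hδdef
  have hδ : 0 < δ := by positivity
  have hIcc : ∀ s : ℝ, |s| ≤ δ → g s ∈ W := by
    intro s hs
    apply hball
    simp only [mem_ball, dist_zero_right, Real.norm_eq_abs]
    linarith
  set gg : ℝ → ℝ := fun s => ℓ (g s) with hgg
  have coegg : ∀ s, ((gg s : ℝ) : AddCircle T) = g s := fun s => sect (g s)
  have boundgg : ∀ s, |s| ≤ δ → |gg s| < T/4 := by
    intro s hs
    obtain ⟨u, hu, huc⟩ := hIcc s hs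
    have : gg s = u := by
      rw [hgg]; simp only; rw [← huc]
      exact ℓsmall u (by rw [abs_lt]; exact ⟨by linarith [hu.1], by linarith [hu.2]⟩)
    rw [this, abs_lt]; exact ⟨by linarith [hu.1], by linarith [hu.2]⟩
  have add_small : ∀ x y : ℝ, |x| ≤ δ → |y| ≤ δ → |x + y| ≤ δ →
      gg (x + y) = gg x + gg y := by
    intro x y hx hy hxy
    apply coe_inj_small hT
    · have b1 := boundgg x hx
      have b2 := boundgg y hy
      have b3 := boundgg (x + y) hxy
      have : |gg (x+y) - (gg x + gg y)| ≤ |gg (x+y)| + (|gg x| + |gg y|) := by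
        calc |gg (x+y) - (gg x + gg y)| ≤ |gg (x+y)| + |gg x + gg y| := abs_sub _ _
          _ ≤ |gg (x+y)| + (|gg x| + |gg y|) := by linarith [abs_add_le (gg x) (gg y)]
      linarith
    · rw [AddCircle.coe_add, coegg, coegg, coegg, hadd]
  have contgg : ∀ s : ℝ, |s| ≤ δ → ContinuousAt gg s := by
    intro s hs
    obtain ⟨u, hu, huc⟩ := hIcc s hs
    have hne : g s ≠ ((a : ℝ) : AddCircle T) := by
      rw [← huc]
      intro hcon
      have : u = a := by
        apply coe_inj_small hT _ hcon
        rw [ha, abs_lt]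
        constructor <;> [skip; skip] <;> cases hu with
          | intro h1 h2 => linarith
      rw [ha] at this; rw [this] at hu; cases hu with
        | intro h1 h2 => linarith
    have hc1 : ContinuousAt (AddCircle.equivIoc T a) (g s) :=
      AddCircle.continuousAt_equivIoc T a hne
    exact (continuous_subtype_val.continuousAt.comp hc1).comp hg.continuousAt
  -- doubling
  have dbl : ∀ s : ℝ, |s| ≤ δ → gg s = 2 * gg (s / 2) := by
    intro s hs
    have h2 : |s / 2| ≤ δ := by rw [abs_div]; simp; linarith [abs_nonneg s]
    have := add_small (s/2) (s/2) h2 h2 (by rw [add_halves]; exact hs)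
    rw [add_halves] at this
    rw [this]; ring
  have iter : ∀ (n : ℕ) (s : ℝ), |s| ≤ δ → gg s = 2 ^ n * gg (s / 2 ^ n) := by
    intro n
    induction n with
    | zero => intro s _; simp
    | succ n ih =>
        intro s hs
        have h1 : |s / 2 ^ n| ≤ δ := by
          rw [abs_div, abs_of_pos (by positivity : (0:ℝ) < 2 ^ n)]
          calc |s| / 2 ^ n ≤ |s| / 1 := by
                apply div_le_div_of_nonneg_left (abs_nonneg s) one_pos
                · exact one_le_pow₀ (by norm_num)
            _ = |s| := div_one _
            _ ≤ δ := hs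
        have := dbl (s / 2 ^ n) h1
        rw [ih s hs, this]
        have : s / 2 ^ n / 2 = s / 2 ^ (n + 1) := by
          rw [div_div]; ring_nf
        rw [this]; ring
  -- global lift
  set N : ℝ → ℕ := fun s => ⌈|s| / δ⌉₊ with hN
  have hNb : ∀ s : ℝ, |s| ≤ δ * 2 ^ (N s) := by
    intro s
    have h1 : |s| / δ ≤ (N s : ℝ) := Nat.le_ceil _
    have h2 : (N s : ℝ) ≤ 2 ^ (N s) := by
      exact_mod_cast (Nat.lt_two_pow_self (n := N s)).le
    have : |s| ≤ δ * N s := by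
      rw [div_le_iff₀ hδ] at h1; linarith [h1]
    calc |s| ≤ δ * N s := this
      _ ≤ δ * 2 ^ (N s) := by
        apply mul_le_mul_of_nonneg_left h2 hδ.le
  set G : ℝ → ℝ := fun s => 2 ^ (N s) * gg (s / 2 ^ (N s)) with hGdef
  have habsdiv : ∀ (s : ℝ) (n : ℕ), |s| ≤ δ * 2 ^ n → |s / 2 ^ n| ≤ δ := by
    intro s n h
    rw [abs_div, abs_of_pos (by positivity : (0:ℝ) < 2 ^ n), div_le_iff₀ (by positivity : (0:ℝ) < 2 ^ n)]
    linarith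
  have consist : ∀ (m n : ℕ), m ≤ n → ∀ s : ℝ, |s| ≤ δ * 2 ^ m →
      (2:ℝ) ^ m * gg (s / 2 ^ m) = 2 ^ n * gg (s / 2 ^ n) := by
    intro m n hmn s hs
    obtain ⟨k, rfl⟩ := Nat.exists_eq_add_of_le hmn
    have h1 : |s / 2 ^ m| ≤ δ := habsdiv s m hs
    have h2 := iter k (s / 2 ^ m) h1
    have h3 : s / 2 ^ m / 2 ^ k = s / 2 ^ (m + k) := by
      rw [div_div, ← pow_add]
    rw [h3] at h2
    rw [h2, pow_add]; ring
  have Wgen : ∀ (s : ℝ) (n : ℕ), |s| ≤ δ * 2 ^ n → G s = 2 ^ n * gg (s / 2 ^ n) := by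
    intro s n hsn
    rcases le_total (N s) n with h | h
    · exact consist (N s) n h s (hNb s)
    · exact (consist n (N s) h s hsn).symm
  have hGcont : Continuous G := by
    rw [continuous_iff_continuousAt]
    intro s₀
    set n : ℕ := N s₀ + 1 with hn
    have hs₀ : |s₀| < δ * 2 ^ n := by
      calc |s₀| ≤ δ * 2 ^ (N s₀) := hNb s₀
        _ < δ * 2 ^ n := by
            apply mul_lt_mul_of_pos_left _ hδ
            apply pow_lt_pow_right₀ (by norm_num) (by omega)
    have hU : IsOpen {s : ℝ | |s| < δ * 2 ^ n} := by
      have : Continuous (fun s : ℝ => |s|) := continuous_abs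
      exact isOpen_lt this continuous_const
    have heq : ∀ s ∈ {s : ℝ | |s| < δ * 2 ^ n}, G s = 2 ^ n * gg (s / 2 ^ n) :=
      fun s hs => Wgen s n (le_of_lt hs)
    have hca : ContinuousAt (fun s : ℝ => 2 ^ n * gg (s / 2 ^ n)) s₀ := by
      have h1 : ContinuousAt gg (s₀ / 2 ^ n) :=
        contgg _ (habsdiv s₀ n hs₀.le)
      have hd : ContinuousAt (fun s : ℝ => s / 2 ^ n) s₀ :=
        (continuous_id.div_const _).continuousAt
      have h2 := ContinuousAt.comp (x := s₀) (f := fun s : ℝ => s / 2 ^ n) (g := gg) h1 hd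
      exact continuousAt_const.mul h2
    apply hca.congr
    apply Filter.eventuallyEq_of_mem (hU.mem_nhds hs₀)
    intro s hs
    exact (heq s hs).symm
  have hGadd : ∀ x y : ℝ, G (x + y) = G x + G y := by
    intro x y
    obtain ⟨n, hn⟩ : ∃ n : ℕ, |x| ≤ δ * 2 ^ n ∧ |y| ≤ δ * 2 ^ n ∧ |x + y| ≤ δ * 2 ^ n := by
      refine ⟨N x + N y + N (x + y), ?_, ?_, ?_⟩ <;>
      · refine le_trans (hNb _) ?_
        apply mul_le_mul_of_nonneg_left _ hδ.le
        apply pow_le_pow_right₀ (by norm_num) (by omega)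
    obtain ⟨hx, hy, hxy⟩ := hn
    rw [Wgen x n hx, Wgen y n hy, Wgen (x + y) n hxy]
    have h1 : |x / 2 ^ n| ≤ δ := habsdiv x n hx
    have h2 : |y / 2 ^ n| ≤ δ := habsdiv y n hy
    have h3 : |x / 2 ^ n + y / 2 ^ n| ≤ δ := by
      rw [← add_div]; exact habsdiv _ n hxy
    have := add_small (x / 2 ^ n) (y / 2 ^ n) h1 h2 h3
    rw [← add_div] at this
    rw [this]; ring
  -- linearity of G
  set Ghom : ℝ →+ ℝ := AddMonoidHom.mk' G hGadd with hGhom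
  have hsmul : ∀ (c : ℝ) (x : ℝ), Ghom (c • x) = c • Ghom x :=
    map_real_smul Ghom hGcont
  refine ⟨G 1, fun s => ?_⟩
  have hGs : G s = G 1 * s := by
    have := hsmul s 1
    simp only [smul_eq_mul, mul_one] at this
    have h2 : Ghom s = G s := rfl
    have h3 : Ghom 1 = G 1 := rfl
    rw [h2, h3] at this
    rw [this]; ring
  rw [← hGs]
  -- g s = ↑(G s)
  set n : ℕ := N s with hn
  have hGsn : G s = 2 ^ n * gg (s / 2 ^ n) := Wgen s n (hNb s)
  have ghom : ∀ (m : ℕ) (u : ℝ), m • g u = g (m • u) := by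
    intro m u
    induction m with
    | zero => simp [hg0]
    | succ m ih => rw [succ_nsmul, succ_nsmul, ih, ← hadd]
  have key : ((G s : ℝ) : AddCircle T) = g s := by
    rw [hGsn]
    have h2 : ((2:ℝ) ^ n * gg (s / 2 ^ n)) = (2 ^ n : ℕ) • gg (s / 2 ^ n) := by
      push_cast [nsmul_eq_mul]; ring
    rw [h2, AddCircle.coe_nsmul, coegg, ghom]
    congr 1
    rw [nsmul_eq_mul]; push_cast; field_simp
  exact key.symm

variable {ψ : ℝ → M → M}

lemma psi_mem_orbit (hφ : IsFlow φ) (hψ : IsFlow ψ) (hcomm : FlowsCommute φ ψ)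
    (h4 : FinitelyManyShortPeriodicOrbits φ) {p : M} (hp : IsPeriodicPoint φ p) :
    ∀ s : ℝ, ψ s p ∈ flowOrbit φ p := by
  obtain ⟨T₀, hT₀, hper⟩ := exists_minimal_period hφ hp
  have hT₀p : φ T₀ p = p := (hper T₀).mpr ⟨1, one_smul _ _⟩
  obtain ⟨F, hF, hFs⟩ := h4 (T₀ + 1) (by linarith)
  set S : Set M := {y | φ T₀ y = y ∧ ¬ IsEquilibrium φ y} with hS
  have horb : ∀ y ∈ S, ∃ q ∈ F, flowOrbit φ y = flowOrbit φ q := by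
    intro y hy
    exact hFs y ⟨⟨T₀, hT₀, hy.1⟩, hy.2⟩ ⟨T₀, hT₀, by linarith, hy.1⟩
  set 𝒪 : Set (Set M) := {O | (∃ q ∈ F, O = flowOrbit φ q) ∧ ∃ y ∈ S, flowOrbit φ y = O}
    with h𝒪
  have h𝒪fin : 𝒪.Finite := by
    apply Set.Finite.subset (hF.image (flowOrbit φ))
    rintro O ⟨⟨q, hq, rfl⟩, -⟩
    exact ⟨q, hq, rfl⟩
  have h𝒪cpt : ∀ O ∈ 𝒪, IsCompact O := by
    rintro O ⟨-, y, hy, rfl⟩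
    exact orbit_isCompact hφ hT₀ hy.1
  have h𝒪orb : ∀ O ∈ 𝒪, ∀ z ∈ O, flowOrbit φ z = O := by
    rintro O ⟨-, y, hy, rfl⟩ z hz
    exact orbit_eq_of_mem hφ hz
  have h𝒪disj : ∀ O ∈ 𝒪, ∀ O' ∈ 𝒪, O ≠ O' → ∀ z, z ∈ O → z ∉ O' := by
    intro O hO O' hO' hne z hz hz'
    exact hne ((h𝒪orb O hO z hz).symm.trans (h𝒪orb O' hO' z hz'))
  have hScover : ∀ y ∈ S, ∃ O ∈ 𝒪, y ∈ O := by
    intro y hy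
    obtain ⟨q, hq, hyq⟩ := horb y hy
    exact ⟨flowOrbit φ q, ⟨⟨q, hq, rfl⟩, ⟨y, hy, hyq⟩⟩, hyq ▸ mem_orbit_self hφ y⟩
  -- the curve s ↦ ψ s p stays in S
  have hγS : ∀ s : ℝ, ψ s p ∈ S := by
    intro s
    constructor
    · rw [← hcomm s T₀ p, hT₀p]
    · intro heq
      apply hp.2
      intro t
      have h1 : ψ (-s) (ψ s (φ t p)) = φ t p := by
        rw [← hψ.2.2, neg_add_cancel, hψ.2.1]
      calc φ t p = ψ (-s) (ψ s (φ t p)) := h1.symm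
        _ = ψ (-s) (φ t (ψ s p)) := by rw [hcomm s t p]
        _ = ψ (-s) (ψ s p) := by rw [heq t]
        _ = p := by rw [← hψ.2.2, neg_add_cancel, hψ.2.1]
  have hpS : p ∈ S := ⟨hT₀p, hp.2⟩
  obtain ⟨Op, hOp, hpOp⟩ := hScover p hpS
  have hOrbp : flowOrbit φ p = Op := h𝒪orb Op hOp p hpOp
  -- connectedness argument
  set A : Set ℝ := (fun s => ψ s p) ⁻¹' Op with hA
  have hγcont : Continuous fun s => ψ s p := flow_cont_t hψ p
  have hAclosed : IsClosed A := ((h𝒪cpt Op hOp).isClosed).preimage hγcont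
  have hAopen : IsOpen A := by
    have hcompl : Aᶜ = (fun s => ψ s p) ⁻¹' (⋃ O ∈ 𝒪 \ {Op}, O) := by
      ext s
      simp only [Set.mem_compl_iff, Set.mem_preimage, Set.mem_iUnion]
      constructor
      · intro hs
        obtain ⟨O, hO, hsO⟩ := hScover (ψ s p) (hγS s)
        refine ⟨O, ⟨hO, ?_⟩, hsO⟩
        intro hOeq
        rw [Set.mem_singleton_iff] at hOeq
        exact hs (by rw [hA, Set.mem_preimage, ← hOeq]; exact hsO)
      · rintro ⟨O, ⟨hO, hOne⟩, hsO⟩ hsOp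
        rw [Set.mem_singleton_iff] at hOne
        exact h𝒪disj O hO Op hOp hOne _ hsO hsOp
    rw [← isClosed_compl_iff, hcompl]
    apply IsClosed.preimage hγcont
    apply Set.Finite.isClosed_biUnion (h𝒪fin.subset Set.diff_subset)
    intro O hO
    exact (h𝒪cpt O hO.1).isClosed
  have hA0 : (0 : ℝ) ∈ A := by
    simp only [hA, Set.mem_preimage, hψ.2.1]
    exact hpOp
  have hAuniv : A = Set.univ := IsClopen.eq_univ ⟨hAclosed, hAopen⟩ ⟨0, hA0⟩
  intro s
  have : s ∈ A := hAuniv ▸ Set.mem_univ s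
  rw [hOrbp]
  exact this

lemma exists_c_periodic (hφ : IsFlow φ) (hψ : IsFlow ψ) (hcomm : FlowsCommute φ ψ)
    (h4 : FinitelyManyShortPeriodicOrbits φ) {p : M} (hp : IsPeriodicPoint φ p) :
    ∃ c : ℝ, ∀ s : ℝ, ψ s p = φ (c * s) p := by
  obtain ⟨T₀, hT₀, hper⟩ := exists_minimal_period hφ hp
  haveI : Fact (0 < T₀) := ⟨hT₀⟩
  -- the parametrization of the orbit
  set Θ : AddCircle T₀ → M := fun v => Quotient.liftOn' v (fun t => φ t p) (by
    intro a b hab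
    have hmem : -a + b ∈ AddSubgroup.zmultiples T₀ := QuotientAddGroup.leftRel_apply.mp hab
    have hperiod : φ (-a + b) p = p := flow_period_mem hφ
      ((hper T₀).mpr ⟨1, one_smul _ _⟩) hmem
    calc φ a p = φ a (φ (-a + b) p) := by rw [hperiod]
      _ = φ (a + (-a + b)) p := (hφ.2.2 _ _ _).symm
      _ = φ b p := by ring_nf) with hΘ
  have Θcoe : ∀ t : ℝ, Θ ((t : ℝ) : AddCircle T₀) = φ t p := fun t => rfl
  have Θcont : Continuous Θ := by
    apply Continuous.quotient_liftOn'
    exact flow_cont_t hφ p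
  have Θinj : Function.Injective Θ := by
    intro v w hvw
    induction v using QuotientAddGroup.induction_on with | H a =>
    induction w using QuotientAddGroup.induction_on with | H b =>
    rw [Θcoe, Θcoe] at hvw
    have : φ (a - b) p = p := by
      calc φ (a - b) p = φ (-b + a) p := by ring_nf
        _ = φ (-b) (φ a p) := hφ.2.2 _ _ _
        _ = φ (-b) (φ b p) := by rw [hvw]
        _ = p := flow_cancel hφ b p
    exact QuotientAddGroup.eq_iff_sub_mem.mpr ((hper _).mp this)
  have Θrange : Set.range Θ = flowOrbit φ p := by
    ext z
    constructor
    · rintro ⟨v, rfl⟩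
      induction v using QuotientAddGroup.induction_on with | H a =>
      exact ⟨a, rfl⟩
    · rintro ⟨t, rfl⟩
      exact ⟨((t : ℝ) : AddCircle T₀), rfl⟩
  -- homeomorphism onto the orbit
  set e : AddCircle T₀ ≃ Set.range Θ := Equiv.ofInjective Θ Θinj with he
  have econt : Continuous e := Continuous.subtype_mk Θcont _
  set h : AddCircle T₀ ≃ₜ Set.range Θ := Continuous.homeoOfEquivCompactToT2 econt with hh
  have hval : ∀ v : AddCircle T₀, ((h v : M)) = Θ v := fun v => rfl
  -- the additive map
  have hmem : ∀ s : ℝ, ψ s p ∈ Set.range Θ := by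
    intro s
    rw [Θrange]
    exact psi_mem_orbit hφ hψ hcomm h4 hp s
  set g : ℝ → AddCircle T₀ := fun s => h.symm ⟨ψ s p, hmem s⟩ with hg
  have hΘg : ∀ s : ℝ, Θ (g s) = ψ s p := by
    intro s
    have := h.apply_symm_apply ⟨ψ s p, hmem s⟩
    calc Θ (g s) = ((h (g s) : M)) := (hval _).symm
      _ = ψ s p := by rw [hg]; simp only; rw [this]
  have gcont : Continuous g := by
    apply h.symm.continuous.comp
    exact Continuous.subtype_mk (flow_cont_t hψ p) _
  have gadd : ∀ a b : ℝ, g (a + b) = g a + g b := by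
    intro a b
    apply Θinj
    obtain ⟨u, hu⟩ := QuotientAddGroup.mk_surjective (g a)
    obtain ⟨w, hw⟩ := QuotientAddGroup.mk_surjective (g b)
    have h1 : ψ b p = φ w p := by rw [← hΘg b, ← hw, Θcoe]
    have h2 : ψ a p = φ u p := by rw [← hΘg a, ← hu, Θcoe]
    calc Θ (g (a + b)) = ψ (a + b) p := hΘg _
      _ = ψ a (ψ b p) := by rw [← hψ.2.2]
      _ = ψ a (φ w p) := by rw [h1]
      _ = φ w (ψ a p) := hcomm a w p
      _ = φ w (φ u p) := by rw [h2]
      _ = φ (w + u) p := (hφ.2.2 _ _ _).symm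
      _ = Θ ((w + u : ℝ) : AddCircle T₀) := (Θcoe _).symm
      _ = Θ (g a + g b) := by rw [AddCircle.coe_add, ← hu, ← hw, add_comm]
  obtain ⟨c, hc⟩ := addCircle_hom_linear hT₀ g gcont gadd
  refine ⟨c, fun s => ?_⟩
  rw [← hΘg s, hc s, Θcoe]

/-- **Theorem B.** Let `M` be a compact connected Riemannian manifold without boundary and
`(X_t)_t` a continuous flow with (1) finitely many equilibria, (2) dense periodic points,
(3) transitivity, and (4) only finitely many periodic orbits of period `< T` for every `T`.
Then the `C^0`-centralizer of `(X_t)_t` is trivial: every continuous flow `(Y_s)_s` commuting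
with `(X_t)_t` satisfies `Y_t = X_{ct}` for some constant `c ∈ ℝ`. -/
theorem c0_centralizer_trivial
    [CompactSpace M] [ConnectedSpace M]
    (φ : ℝ → M → M) (hφ : IsFlow φ)
    (h1 : {p : M | IsEquilibrium φ p}.Finite)
    (h2 : Dense {p : M | IsPeriodicPoint φ p})
    (h3 : IsTransitiveFlow φ)
    (h4 : FinitelyManyShortPeriodicOrbits φ)
    (ψ : ℝ → M → M) (hψ : IsFlow ψ) (hcomm : FlowsCommute φ ψ) :
    ∃ c : ℝ, ∀ (t : ℝ) (x : M), ψ t x = φ (c * t) x := by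
  obtain ⟨x, hdense⟩ := h3
  -- x is not an equilibrium
  have hxneq : ¬ IsEquilibrium φ x := by
    intro hxeq
    have hsub : {y : M | ∃ t : ℝ, 0 ≤ t ∧ φ t x = y} = {x} := by
      ext y
      constructor
      · rintro ⟨t, -, rfl⟩; exact (hxeq t)
      · rintro rfl; exact ⟨0, le_refl 0, hφ.2.1 _⟩
    rw [hsub] at hdense
    have huniv : ({x} : Set M) = Set.univ := by
      have := hdense.closure_eq
      rwa [closure_singleton] at this
    obtain ⟨p, hp⟩ := h2.nonempty
    have hpx : p = x := by
      have : p ∈ ({x} : Set M) := huniv ▸ Set.mem_univ p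
      exact this
    exact hp.2 (hpx ▸ hxeq)
  -- a sequence of periodic points converging to x
  have hseq : ∀ n : ℕ, ∃ p : M, IsPeriodicPoint φ p ∧ dist x p < 1 / (n + 1) := by
    intro n
    have hx : x ∈ closure {p : M | IsPeriodicPoint φ p} := h2 x
    exact Metric.mem_closure_iff.mp hx _ (by positivity)
  choose P hP1 hP2 using hseq
  choose c hc using fun n => exists_c_periodic hφ hψ hcomm h4 (hP1 n)
  -- P n → x
  have hPlim : Filter.Tendsto P Filter.atTop (𝓝 x) := by
    rw [tendsto_iff_dist_tendsto_zero]
    exact squeeze_zero (g := fun n : ℕ => 1 / ((n : ℝ) + 1)) (fun n => dist_nonneg)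
      (fun n => by rw [dist_comm]; exact (hP2 n).le)
      tendsto_one_div_add_atTop_nhds_zero_nat
  -- claim: there is c₀ with ψ s x = φ (c₀ s) x for all s
  have key : ∃ c₀ : ℝ, ∀ s : ℝ, ψ s x = φ (c₀ * s) x := by
    by_cases hb : ∃ K : ℝ, {n : ℕ | |c n| ≤ K}.Infinite
    · obtain ⟨K, hK⟩ := hb
      haveI := hK.to_subtype
      set k : ℕ → ℕ := fun n => ((Nat.Subtype.orderIsoOfNat {n : ℕ | |c n| ≤ K} n : ℕ)) with hk
      have hkmono : StrictMono k :=
        fun a b hab => (Nat.Subtype.orderIsoOfNat {n : ℕ | |c n| ≤ K}).strictMono hab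
      have hkmem : ∀ n, |c (k n)| ≤ K :=
        fun n => (Nat.Subtype.orderIsoOfNat {n : ℕ | |c n| ≤ K} n).2
      have hbd : ∀ n, c (k n) ∈ Icc (-K) K := by
        intro n
        rcases abs_le.mp (hkmem n) with ⟨h1, h2⟩
        exact ⟨h1, h2⟩
      obtain ⟨c₀, -, m, hmmono, hconv⟩ :=
        tendsto_subseq_of_bounded (isBounded_Icc (-K) K) hbd
      set idx : ℕ → ℕ := k ∘ m with hidx
      have hidxmono : StrictMono idx := hkmono.comp hmmono
      have hPidx : Filter.Tendsto (P ∘ idx) Filter.atTop (𝓝 x) :=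
        hPlim.comp hidxmono.tendsto_atTop
      refine ⟨c₀, fun s => ?_⟩
      have hlim1 : Filter.Tendsto (fun n => ψ s (P (idx n))) Filter.atTop (𝓝 (ψ s x)) :=
        ((flow_cont_x hψ s).continuousAt.tendsto).comp hPidx
      have hlim2 : Filter.Tendsto (fun n => φ (c (idx n) * s) (P (idx n)))
          Filter.atTop (𝓝 (φ (c₀ * s) x)) := by
        have hcs : Filter.Tendsto (fun n => c (idx n) * s) Filter.atTop (𝓝 (c₀ * s)) :=
          hconv.mul_const s
        have hpair : Filter.Tendsto (fun n => ((c (idx n) * s, P (idx n)) : ℝ × M))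
            Filter.atTop (𝓝 (c₀ * s, x)) := hcs.prodMk_nhds hPidx
        exact (hφ.1.continuousAt.tendsto).comp hpair
      have heq : ∀ n, ψ s (P (idx n)) = φ (c (idx n) * s) (P (idx n)) :=
        fun n => hc (idx n) s
      rw [← funext heq] at hlim2
      exact tendsto_nhds_unique hlim1 hlim2
    · exfalso
      push_neg at hb
      apply hxneq
      intro t
      -- |c n| → ∞
      have habs : Filter.Tendsto (fun n => |c n|) Filter.atTop Filter.atTop := by
        rw [Filter.tendsto_atTop]
        intro K
        have hfin : {n : ℕ | |c n| < K}.Finite := by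
          have h1 : {n : ℕ | |c n| ≤ K}.Finite := hb K
          exact h1.subset (fun n hn => by
            simp only [Set.mem_setOf_eq] at hn ⊢; exact le_of_lt hn)
        rw [Filter.eventually_atTop]
        obtain ⟨N, hN⟩ := hfin.bddAbove
        refine ⟨N + 1, fun n hn => ?_⟩
        by_contra hcon
        push_neg at hcon
        have : n ≤ N := hN hcon
        omega
      have hne0 : ∀ᶠ n in Filter.atTop, c n ≠ 0 := by
        have := habs.eventually_ge_atTop 1
        filter_upwards [this] with n hn
        intro h0
        rw [h0] at hn; simp at hn; linarith
      set s : ℕ → ℝ := fun n => t / c n with hs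
      have hslim : Filter.Tendsto s Filter.atTop (𝓝 0) := by
        apply (tendsto_zero_iff_abs_tendsto_zero s).mpr
        have : (abs ∘ s) = fun n => |t| / |c n| := by
          funext n; simp only [Function.comp_apply, hs]; exact abs_div t (c n)
        rw [this]
        exact Filter.Tendsto.div_atTop tendsto_const_nhds habs
      have hlim1 : Filter.Tendsto (fun n => ψ (s n) (P n)) Filter.atTop (𝓝 x) := by
        have hpair : Filter.Tendsto (fun n => ((s n, P n) : ℝ × M))
            Filter.atTop (𝓝 (0, x)) := hslim.prodMk_nhds hPlim
        have := (hψ.1.continuousAt.tendsto).comp hpair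
        rwa [hψ.2.1 x] at this
      have hlim2 : Filter.Tendsto (fun n => φ t (P n)) Filter.atTop (𝓝 (φ t x)) :=
        ((flow_cont_x hφ t).continuousAt.tendsto).comp hPlim
      have heq : ∀ᶠ n in Filter.atTop, φ t (P n) = ψ (s n) (P n) := by
        filter_upwards [hne0] with n hn
        have : c n * s n = t := by rw [hs]; field_simp
        rw [hc n (s n), this]
      exact (tendsto_nhds_unique_of_eventuallyEq hlim2 hlim1 heq)
  -- extend from x to all of M by transitivity
  obtain ⟨c₀, hx⟩ := key
  refine ⟨c₀, fun t y => ?_⟩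
  have hy : y ∈ closure {z : M | ∃ τ : ℝ, 0 ≤ τ ∧ φ τ x = z} := hdense y
  obtain ⟨u, hu, hulim⟩ := mem_closure_iff_seq_limit.mp hy
  choose τ hτ0 hτ using hu
  have hlim1 : Filter.Tendsto (fun n => ψ t (u n)) Filter.atTop (𝓝 (ψ t y)) :=
    ((flow_cont_x hψ t).continuousAt.tendsto).comp hulim
  have hlim2 : Filter.Tendsto (fun n => φ (c₀ * t) (u n)) Filter.atTop (𝓝 (φ (c₀ * t) y)) :=
    ((flow_cont_x hφ (c₀ * t)).continuousAt.tendsto).comp hulim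
  have heq : ∀ n, ψ t (u n) = φ (c₀ * t) (u n) := by
    intro n
    calc ψ t (u n) = ψ t (φ (τ n) x) := by rw [hτ n]
      _ = φ (τ n) (ψ t x) := hcomm t (τ n) x
      _ = φ (τ n) (φ (c₀ * t) x) := by rw [hx t]
      _ = φ (τ n + c₀ * t) x := (hφ.2.2 _ _ _).symm
      _ = φ (c₀ * t + τ n) x := by ring_nf
      _ = φ (c₀ * t) (φ (τ n) x) := hφ.2.2 _ _ _
      _ = φ (c₀ * t) (u n) := by rw [hτ n]
  rw [← funext heq] at hlim2
  exact tendsto_nhds_unique hlim1 hlim2
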